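/- (PSDP-style error accumulation) If for all k, v* - v^{σ_k} ≤ ξ D^{π*}_κ P^{π*}(v* - v^{σ_{k-1}}) + δ̄_k component-wise, with ξ ∈ [0,1), D^{π*}_κ P^{π*} row-stochastic, ‖v* - v^{σ_0}‖_∞ ≤ R_max/(1-γ), and μ δ̄_i ≤ δ for a probability measure μ with μ(ξD^{π*}_κ P^{π*})^i ≤ c^{π*}(i)·ν scaled appropriately, then μ(v* - v^{σ_k}) ≤ Σ_{i=0}^{k-1} μ(ξ D^{π*}_κ P^{π*})^i δ̄_{k-i} + ξ^k R_max/(1-γ). -/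

import Mathlib

open scoped Matrix
def IsStochastic {n : ℕ} (P : Matrix (Fin n) (Fin n) ℝ) : Prop :=
  (∀ i j, 0 ≤ P i j) ∧ ∀ i, ∑ j, P i j = 1

lemma stmt17_aux {n : ℕ} (ξ R : ℝ) (hξ0 : 0 ≤ ξ)
    (B : Matrix (Fin n) (Fin n) ℝ) (hB : IsStochastic B)
    (vstar : Fin n → ℝ) (vσ δbar : ℕ → Fin n → ℝ)
    (hrec : ∀ k, 1 ≤ k →
      vstar - vσ k ≤ (ξ • B).mulVec (vstar - vσ (k-1)) + δbar k)
    (h0 : ∀ s, vstar s - vσ 0 s ≤ R) :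
    ∀ k (w : Fin n → ℝ), (∀ s, 0 ≤ w s) →
      w ⬝ᵥ (vstar - vσ k)
        ≤ (∑ i ∈ Finset.range k, w ⬝ᵥ ((ξ • B)^i).mulVec (δbar (k-i)))
          + (∑ s, w s) * ξ^k * R := by
  intro k
  induction k with
  | zero =>
    intro w hw
    simp only [Finset.range_zero, Finset.sum_empty, pow_zero, mul_one, zero_add]
    rw [dotProduct, Finset.sum_mul]
    apply Finset.sum_le_sum
    intro s _
    exact mul_le_mul_of_nonneg_left (h0 s) (hw s)
  | succ k ih =>
    intro w hw
    have hrec' := hrec (k+1) (by omega)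
    simp only [Nat.add_sub_cancel] at hrec'
    have step1 : w ⬝ᵥ (vstar - vσ (k+1))
        ≤ w ⬝ᵥ ((ξ • B).mulVec (vstar - vσ k)) + w ⬝ᵥ δbar (k+1) := by
      rw [← dotProduct_add]
      apply Finset.sum_le_sum
      intro s _
      exact mul_le_mul_of_nonneg_left (hrec' s) (hw s)
    set w' : Fin n → ℝ := Matrix.vecMul w (ξ • B) with hw'def
    have hw' : ∀ s, 0 ≤ w' s := by
      intro j
      rw [hw'def]
      simp only [Matrix.vecMul, dotProduct, Matrix.smul_apply, smul_eq_mul]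
      apply Finset.sum_nonneg
      intro s _
      exact mul_nonneg (hw s) (mul_nonneg hξ0 (hB.1 s j))
    have hsum : (∑ s, w' s) = ξ * ∑ s, w s := by
      simp only [hw'def, Matrix.vecMul, dotProduct, Matrix.smul_apply, smul_eq_mul]
      rw [Finset.sum_comm, Finset.mul_sum]
      apply Finset.sum_congr rfl
      intro s _
      have : ∀ j, w s * (ξ * B s j) = (ξ * w s) * B s j := fun j => by ring
      simp_rw [this]
      rw [← Finset.mul_sum, hB.2 s, mul_one]
    have hdot : w ⬝ᵥ ((ξ • B).mulVec (vstar - vσ k)) = w' ⬝ᵥ (vstar - vσ k) := by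
      rw [Matrix.dotProduct_mulVec]
    have ihw := ih w' hw'
    have hshift : ∀ i (v : Fin n → ℝ),
        w' ⬝ᵥ ((ξ • B)^i).mulVec v = w ⬝ᵥ ((ξ • B)^(i+1)).mulVec v := by
      intro i v
      rw [Matrix.dotProduct_mulVec, Matrix.dotProduct_mulVec, hw'def,
        Matrix.vecMul_vecMul, ← pow_succ']
    calc w ⬝ᵥ (vstar - vσ (k+1))
        ≤ w ⬝ᵥ ((ξ • B).mulVec (vstar - vσ k)) + w ⬝ᵥ δbar (k+1) := step1
      _ ≤ ((∑ i ∈ Finset.range k, w' ⬝ᵥ ((ξ • B)^i).mulVec (δbar (k-i)))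
            + (∑ s, w' s) * ξ^k * R) + w ⬝ᵥ δbar (k+1) := by
          rw [hdot]; exact add_le_add_left ihw _
      _ = (∑ i ∈ Finset.range (k+1), w ⬝ᵥ ((ξ • B)^i).mulVec (δbar (k+1-i)))
            + (∑ s, w s) * ξ^(k+1) * R := by
          rw [Finset.sum_range_succ']
          simp only [pow_zero, Matrix.one_mulVec, Nat.sub_zero, hsum]
          have : ∀ i ∈ Finset.range k,
              w' ⬝ᵥ ((ξ • B)^i).mulVec (δbar (k-i))
              = w ⬝ᵥ ((ξ • B)^(i+1)).mulVec (δbar (k+1-(i+1))) := by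
            intro i hi
            rw [hshift]
            simp [Nat.succ_sub_succ]
          rw [Finset.sum_congr rfl this]
          ring

/-- PSDP-style error accumulation: if for all `k ≥ 1`,
`v* - v^{σ_k} ≤ ξ B* (v* - v^{σ_{k-1}}) + δ̄_k` component-wise, with `B* = D^{π*}_κ P^{π*}`
row-stochastic, `ξ ∈ [0,1)`, `‖v* - v^{σ_0}‖_∞ ≤ R_max/(1-γ)`, `μ δ̄_i ≤ δ` for the probability
vector `μ`, and `μ (ξ B*)^i ≤ c(i) ν`, then
`μ(v* - v^{σ_k}) ≤ Σ_{i=0}^{k-1} μ (ξ B*)^i δ̄_{k-i} + ξ^k R_max/(1-γ)`. -/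
theorem stmt17 {n : ℕ} (γ ξ Rmax δ : ℝ) (hγ : γ ∈ Set.Ioo (0:ℝ) 1) (hξ : ξ ∈ Set.Ico (0:ℝ) 1)
    (Bstar : Matrix (Fin n) (Fin n) ℝ) (hBstar : IsStochastic Bstar)
    (μ ν : Fin n → ℝ) (hμ : (∀ s, 0 ≤ μ s) ∧ ∑ s, μ s = 1)
    (hν : (∀ s, 0 ≤ ν s) ∧ ∑ s, ν s = 1)
    (c : ℕ → ℝ) (hc : ∀ i, Matrix.vecMul μ ((ξ • Bstar)^i) ≤ c i • ν)
    (vstar : Fin n → ℝ) (vσ : ℕ → Fin n → ℝ) (δbar : ℕ → Fin n → ℝ)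
    (hrec : ∀ k, 1 ≤ k →
      vstar - vσ k ≤ (ξ • Bstar).mulVec (vstar - vσ (k-1)) + δbar k)
    (h0 : ‖vstar - vσ 0‖ ≤ Rmax / (1-γ))
    (hδ : ∀ i, μ ⬝ᵥ δbar i ≤ δ) :
    ∀ k, μ ⬝ᵥ (vstar - vσ k)
      ≤ (∑ i ∈ Finset.range k, μ ⬝ᵥ ((ξ • Bstar)^i).mulVec (δbar (k-i)))
        + ξ^k * (Rmax / (1-γ)) := by
  intro k
  have h0' : ∀ s, vstar s - vσ 0 s ≤ Rmax / (1-γ) := by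
    intro s
    calc vstar s - vσ 0 s ≤ |(vstar - vσ 0) s| := le_abs_self ((vstar - vσ 0) s)
      _ ≤ ‖vstar - vσ 0‖ := by
          rw [← Real.norm_eq_abs]; exact norm_le_pi_norm _ s
      _ ≤ Rmax / (1-γ) := h0
  have := stmt17_aux ξ (Rmax / (1-γ)) hξ.1 Bstar hBstar vstar vσ δbar hrec h0' k μ hμ.1
  rw [hμ.2] at this
  calc μ ⬝ᵥ (vstar - vσ k)
      ≤ (∑ i ∈ Finset.range k, μ ⬝ᵥ ((ξ • Bstar)^i).mulVec (δbar (k-i)))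
        + 1 * ξ^k * (Rmax / (1-γ)) := this
    _ = _ := by ring
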